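/- Let ω : R^n → R^n satisfy the two-sided Lipschitz (quasi-convexity) condition βμ|x₁ - x₂|₂² ≤ (ω(x₁) - ω(x₂))·(x₁ - x₂) and |ω(x₁) - ω(x₂)|₂ ≤ β|x₁ - x₂|₂, with constants β, μ > 0. Let M ⊆ R^n be an r-dimensional subspace spanned by integer vectors k^{(1)},...,k^{(r)} with |k^{(i)}|₁ ≤ K, and let l ∈ Z^r. Let Z = {x : |k^{(j)}·ω(x) + 2πl_j| ≤ α for all j}. Fix x₀ and let C = {x ∈ Z : dist(x, x₀ + M) ≤ δ}. Then for any x₁, x₂ ∈ C, |x₁ - x₂|₂ ≤ (4/μ)δ + (2rK^{r-1}/(βμ))α. -/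

import Mathlib

open scoped RealInnerProductSpace

open Finset

open InnerProductSpace

variable {E : Type*} [NormedAddCommGroup E] [InnerProductSpace ℝ E]

lemma gs_inner_self {r : ℕ} [WellFoundedLT (Fin r)] (f : Fin r → E) (a : Fin r) :
    ⟪gramSchmidt ℝ f a, f a⟫ = ‖gramSchmidt ℝ f a‖ ^ 2 := by
  conv_lhs => rw [gramSchmidt_def'' ℝ f a]
  rw [inner_add_right, real_inner_self_eq_norm_sq, inner_sum, add_eq_left]
  refine Finset.sum_eq_zero fun i hi => ?_
  rw [real_inner_smul_right, gramSchmidt_orthogonal ℝ f (Finset.mem_Iio.1 hi).ne', mul_zero]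

lemma gs_norm_le {r : ℕ} [WellFoundedLT (Fin r)] (f : Fin r → E) (a : Fin r) :
    ‖gramSchmidt ℝ f a‖ ≤ ‖f a‖ := by
  set g := gramSchmidt ℝ f with hg
  have horth : ⟪g a, f a - g a⟫ = 0 := by
    have h1 : f a - g a = ∑ i ∈ Finset.Iio a,
        ((ℝ ∙ g i).starProjection (f a) : E) := by
      rw [hg, gramSchmidt_def ℝ f a]; abel
    rw [h1, inner_sum]
    refine Finset.sum_eq_zero fun i hi => ?_
    obtain ⟨c, hc⟩ := Submodule.mem_span_singleton.1
      ((ℝ ∙ g i).starProjection_apply_mem (f a))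
    rw [← hc, real_inner_smul_right, gramSchmidt_orthogonal ℝ f (Finset.mem_Iio.1 hi).ne',
      mul_zero]
  have hpy := norm_add_sq_real (g a) (f a - g a)
  rw [horth] at hpy
  have : g a + (f a - g a) = f a := by abel
  rw [this] at hpy
  nlinarith [norm_nonneg (f a), norm_nonneg (g a), sq_nonneg ‖f a - g a‖]

lemma gram_det_eq {r : ℕ} [WellFoundedLT (Fin r)] {v : Fin r → E}
    (hv : LinearIndependent ℝ v) :
    (Matrix.of fun a b => (⟪v a, v b⟫ : ℝ)).det = ∏ j, ‖gramSchmidt ℝ v j‖ ^ 2 := by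
  set g := gramSchmidt ℝ v with hg
  have hgne : ∀ j, g j ≠ 0 := fun j => gramSchmidt_ne_zero j hv
  set R : Matrix (Fin r) (Fin r) ℝ :=
    Matrix.of (fun a c => (⟪g c, v a⟫ : ℝ) / ‖g c‖ ^ 2) with hR
  have hRdiag : ∀ a, R a a = 1 := by
    intro a
    show (⟪g a, v a⟫ : ℝ) / ‖g a‖ ^ 2 = 1
    rw [hg, gs_inner_self, div_self (pow_ne_zero 2 (norm_ne_zero_iff.2 (hgne a)))]
  have hRtri : ∀ a c, a < c → R a c = 0 := by
    intro a c hac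
    show (⟪g c, v a⟫ : ℝ) / ‖g c‖ ^ 2 = 0
    rw [hg, gramSchmidt_inv_triangular ℝ v hac, zero_div]
  have hva : ∀ a, v a = ∑ c, R a c • g c := by
    intro a
    have hsub : ∑ c, R a c • g c = ∑ c ∈ Finset.Iic a, R a c • g c := by
      refine (Finset.sum_subset (Finset.subset_univ _) fun c _ hc => ?_).symm
      rw [hRtri a c (by simpa using hc), zero_smul]
    rw [hsub, ← Finset.Iio_insert, Finset.sum_insert (by simp), hRdiag a, one_smul]
    conv_lhs => rw [gramSchmidt_def'' ℝ v a]
    congr 1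
  have hGram : ∀ a b, (⟪v a, v b⟫ : ℝ) = ∑ c, R a c * ‖g c‖ ^ 2 * R b c := by
    intro a b
    conv_lhs => rw [hva a, hva b]
    rw [sum_inner]
    refine Finset.sum_congr rfl fun c _ => ?_
    rw [real_inner_smul_left, inner_sum,
      Finset.sum_eq_single c
        (fun d _ hd => by
          rw [real_inner_smul_right, gramSchmidt_orthogonal ℝ v (Ne.symm hd), mul_zero])
        (fun h => absurd (Finset.mem_univ c) h),
      real_inner_smul_right, real_inner_self_eq_norm_sq]
    ring
  have hMeq : (Matrix.of fun a b => (⟪v a, v b⟫ : ℝ)) =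
      R * Matrix.diagonal (fun c => ‖g c‖ ^ 2) * R.transpose := by
    ext a b
    rw [Matrix.mul_apply]
    simp only [Matrix.mul_diagonal, Matrix.transpose_apply, Matrix.of_apply]
    rw [hGram a b]
  have hRdet : R.det = 1 := by
    have : R.det = ∏ a, R a a :=
      Matrix.det_of_lowerTriangular R (fun i j hij => hRtri i j hij)
    rw [this]
    exact Finset.prod_eq_one fun a _ => hRdiag a
  rw [hMeq, Matrix.det_mul, Matrix.det_mul, Matrix.det_transpose, hRdet, one_mul, mul_one,
    Matrix.det_diagonal]

lemma coeff_bound {n r : ℕ} [WellFoundedLT (Fin r)] {K : ℝ}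
    (k : Fin r → Fin n → ℤ)
    (kv : Fin r → EuclideanSpace ℝ (Fin n))
    (hkv : ∀ a b, kv a b = (k a b : ℝ))
    (hind : LinearIndependent ℝ kv)
    (hknorm : ∀ a, ‖kv a‖ ≤ K)
    (c : Fin r → ℝ) (i : Fin r) :
    |c i| ≤ K ^ (r - 1) * ‖∑ j, c j • kv j‖ := by
  have hrpos : 0 < r := i.pos
  have hK0 : 0 < K := lt_of_lt_of_le (norm_pos_iff.2 (hind.ne_zero i)) (hknorm i)
  set t : Fin r := ⟨r - 1, by omega⟩ with ht
  have htop : ∀ j : Fin r, j ≤ t := fun j => by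
    rw [Fin.le_def]; have := j.2; simp only [ht]; omega
  set σ := Equiv.swap i t with hσ
  set v : Fin r → EuclideanSpace ℝ (Fin n) := kv ∘ σ with hv
  have hlin : LinearIndependent ℝ v := hind.comp σ σ.injective
  set g := gramSchmidt ℝ v with hg
  have hgne : ∀ j, g j ≠ 0 := fun j => gramSchmidt_ne_zero j hlin
  have hvti : v t = kv i := by
    rw [hv]; simp only [Function.comp_apply, hσ, Equiv.swap_apply_right]
  have horth : ∀ m : Fin r, m ≠ i → ⟪g t, kv m⟫ = 0 := by
    intro m hm
    have h1 : σ m ≠ t := by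
      intro h
      exact hm (σ.injective (h.trans (Equiv.swap_apply_left i t).symm))
    have h2 : σ m < t := lt_of_le_of_ne (htop _) h1
    have h3 := gramSchmidt_inv_triangular ℝ v h2
    have h4 : v (σ m) = kv m := by
      rw [hv]; simp only [Function.comp_apply, hσ, Equiv.swap_apply_self]
    rw [h4] at h3
    exact h3
  have hdiag : ⟪g t, kv i⟫ = ‖g t‖ ^ 2 := by
    rw [← hvti, hg]; exact gs_inner_self v t
  have h1 : |c i| * ‖g t‖ ^ 2 ≤ ‖g t‖ * ‖∑ j, c j • kv j‖ := by
    have hin : ⟪g t, ∑ j, c j • kv j⟫ = c i * ‖g t‖ ^ 2 := by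
      rw [inner_sum, Finset.sum_eq_single i
        (fun d _ hd => by rw [real_inner_smul_right, horth d hd, mul_zero])
        (fun h => absurd (Finset.mem_univ i) h), real_inner_smul_right, hdiag]
    calc |c i| * ‖g t‖ ^ 2 = |⟪g t, ∑ j, c j • kv j⟫| := by
          rw [hin, abs_mul, abs_of_nonneg (sq_nonneg ‖g t‖)]
      _ ≤ ‖g t‖ * ‖∑ j, c j • kv j‖ := abs_real_inner_le_norm _ _
  -- determinant ≥ 1
  have hdet1 : (1 : ℝ) ≤ ∏ j, ‖g j‖ ^ 2 := by
    set GZ : Matrix (Fin r) (Fin r) ℤ := Matrix.of (fun a b => ∑ x, k a x * k b x) with hGZ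
    have hcast : ((GZ.det : ℤ) : ℝ) = (Matrix.of fun a b => (⟪kv a, kv b⟫ : ℝ)).det := by
      have hmap := RingHom.map_det (Int.castRingHom ℝ) GZ
      have h6 : ((Int.castRingHom ℝ).mapMatrix GZ) =
          Matrix.of fun a b => (⟪kv a, kv b⟫ : ℝ) := by
        ext a b
        simp only [RingHom.mapMatrix_apply, Matrix.map_apply, Matrix.of_apply, hGZ,
          PiLp.inner_apply, RCLike.inner_apply, conj_trivial, hkv, Int.coe_castRingHom]
        push_cast
        exact Finset.sum_congr rfl fun x _ => mul_comm _ _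
      rw [h6] at hmap
      exact_mod_cast hmap
    have hdetv : (Matrix.of fun a b => (⟪v a, v b⟫ : ℝ)).det =
        (Matrix.of fun a b => (⟪kv a, kv b⟫ : ℝ)).det := by
      have hsub : (Matrix.of fun a b => (⟪v a, v b⟫ : ℝ)) =
          (Matrix.of fun a b => (⟪kv a, kv b⟫ : ℝ)).submatrix σ σ := rfl
      rw [hsub, Matrix.det_submatrix_equiv_self]
    have hgram := gram_det_eq hlin
    have hpos : 0 < ∏ j, ‖g j‖ ^ 2 :=
      Finset.prod_pos fun j _ => pow_pos (norm_pos_iff.2 (hgne j)) 2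
    have hZpos : (0 : ℝ) < (GZ.det : ℝ) := by
      rw [hcast, ← hdetv, hgram]; exact hpos
    have hZ1 : (1 : ℤ) ≤ GZ.det := by exact_mod_cast hZpos
    calc (1 : ℝ) ≤ (GZ.det : ℝ) := by exact_mod_cast hZ1
      _ = ∏ j, ‖g j‖ ^ 2 := by rw [hcast, ← hdetv, hgram]
  have hprod : ∏ j ∈ Finset.univ.erase t, ‖g j‖ ^ 2 ≤ (K ^ (r - 1)) ^ 2 := by
    have hcard : (Finset.univ.erase t).card = r - 1 := by
      rw [Finset.card_erase_of_mem (Finset.mem_univ t), Finset.card_univ, Fintype.card_fin]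
    have hb : ∀ j ∈ Finset.univ.erase t, ‖g j‖ ^ 2 ≤ K ^ 2 := by
      intro j _
      have h5 : ‖g j‖ ≤ K := le_trans (gs_norm_le v j) (hknorm (σ j))
      exact pow_le_pow_left₀ (norm_nonneg _) h5 2
    calc ∏ j ∈ Finset.univ.erase t, ‖g j‖ ^ 2 ≤ ∏ _j ∈ Finset.univ.erase t, K ^ 2 :=
          Finset.prod_le_prod (fun j _ => sq_nonneg _) hb
      _ = (K ^ 2) ^ (r - 1) := by rw [Finset.prod_const, hcard]
      _ = (K ^ (r - 1)) ^ 2 := by rw [← pow_mul, ← pow_mul, Nat.mul_comm]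
  have h2 : 1 ≤ ‖g t‖ * K ^ (r - 1) := by
    have hsplit : ∏ j, ‖g j‖ ^ 2 = ‖g t‖ ^ 2 * ∏ j ∈ Finset.univ.erase t, ‖g j‖ ^ 2 :=
      (Finset.mul_prod_erase Finset.univ _ (Finset.mem_univ t)).symm
    rw [hsplit] at hdet1
    nlinarith [hdet1, mul_le_mul_of_nonneg_left hprod (sq_nonneg ‖g t‖),
      mul_nonneg (norm_nonneg (g t)) (pow_nonneg hK0.le (r - 1)),
      norm_nonneg (g t), pow_nonneg hK0.le (r - 1)]
  have h1' : |c i| * ‖g t‖ ≤ ‖∑ j, c j • kv j‖ := by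
    have hgt0 : 0 < ‖g t‖ := norm_pos_iff.2 (hgne t)
    apply le_of_mul_le_mul_right _ hgt0
    calc |c i| * ‖g t‖ * ‖g t‖ = |c i| * ‖g t‖ ^ 2 := by ring
      _ ≤ ‖g t‖ * ‖∑ j, c j • kv j‖ := h1
      _ = ‖∑ j, c j • kv j‖ * ‖g t‖ := by ring
  nlinarith [mul_le_mul_of_nonneg_right h1' (pow_nonneg hK0.le (r - 1)),
    mul_le_mul_of_nonneg_left h2 (abs_nonneg (c i)), abs_nonneg (c i)]


set_option maxHeartbeats 1000000 in
/-- Proposition 3.1(iv): diameter bound for resonant cylinders. If `ω` satisfies the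
two-sided quasi-convexity/Lipschitz conditions, `M` is the `r`-dimensional subspace
spanned by integer vectors `k⁽ⁱ⁾` with `|k⁽ⁱ⁾|₁ ≤ K`, and `C` is the part of the
resonant zone `Z` within distance `δ` of the affine plane `x₀ + M`, then any two points
of `C` are at distance at most `(4/μ)δ + (2rK^{r-1}/(βμ))α`. -/
theorem stmt_10 (n r : ℕ) (hr : 1 ≤ r) (hrn : r ≤ n)
    (ω : EuclideanSpace ℝ (Fin n) → EuclideanSpace ℝ (Fin n))
    (β μ K α δ : ℝ) (hβ : 0 < β) (hμ : 0 < μ) (hK : 0 < K) (hα : 0 ≤ α) (hδ : 0 ≤ δ)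
    (hconv : ∀ x₁ x₂, β * μ * ‖x₁ - x₂‖ ^ 2 ≤ ⟪ω x₁ - ω x₂, x₁ - x₂⟫)
    (hlip : ∀ x₁ x₂, ‖ω x₁ - ω x₂‖ ≤ β * ‖x₁ - x₂‖)
    (k : Fin r → (Fin n → ℤ))
    (hind : LinearIndependent ℝ (fun i => (WithLp.toLp 2 (fun j => (k i j : ℝ)) : EuclideanSpace ℝ (Fin n))))
    (hk : ∀ i, (∑ j, |(k i j : ℝ)|) ≤ K)
    (M : Submodule ℝ (EuclideanSpace ℝ (Fin n)))
    (hM : M = Submodule.span ℝ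
      (Set.range fun i => (WithLp.toLp 2 (fun j => (k i j : ℝ)) : EuclideanSpace ℝ (Fin n))))
    (l : Fin r → ℤ)
    (Z : Set (EuclideanSpace ℝ (Fin n)))
    (hZ : Z = {x | ∀ j, |⟪((WithLp.equiv 2 (Fin n → ℝ)).symm fun j' => (k j j' : ℝ)), ω x⟫ +
      2 * Real.pi * l j| ≤ α})
    (x₀ : EuclideanSpace ℝ (Fin n))
    (C : Set (EuclideanSpace ℝ (Fin n)))
    (hC : C = {x ∈ Z | ∃ m ∈ M, ‖x - (x₀ + m)‖ ≤ δ}) :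
    ∀ x₁ ∈ C, ∀ x₂ ∈ C,
      ‖x₁ - x₂‖ ≤ (4 / μ) * δ + (2 * r * K ^ (r - 1) / (β * μ)) * α := by
  haveI : WellFoundedLT (Fin r) := inferInstance
  intro x₁ hx₁ x₂ hx₂
  set kv : Fin r → EuclideanSpace ℝ (Fin n) :=
    fun i => (WithLp.equiv 2 (Fin n → ℝ)).symm fun j => (k i j : ℝ) with hkvdef
  have hkv : ∀ a b, kv a b = (k a b : ℝ) := fun a b => rfl
  have hind' : LinearIndependent ℝ kv := hind
  have hMspan : M = Submodule.span ℝ (Set.range kv) := hM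
  have hknorm : ∀ a, ‖kv a‖ ≤ K := by
    intro a
    rw [EuclideanSpace.norm_eq]
    have hsq : ∀ b : Fin n, ‖kv a b‖ ^ 2 = |(k a b : ℝ)| ^ 2 := by
      intro b; rw [hkv, Real.norm_eq_abs]
    have hle : ∑ b, ‖kv a b‖ ^ 2 ≤ (∑ b, |(k a b : ℝ)|) ^ 2 := by
      calc ∑ b, ‖kv a b‖ ^ 2 = ∑ b, |(k a b : ℝ)| ^ 2 := Finset.sum_congr rfl fun b _ => hsq b
        _ ≤ (∑ b, |(k a b : ℝ)|) ^ 2 :=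
            Finset.sum_sq_le_sq_sum_of_nonneg fun b _ => abs_nonneg _
    calc Real.sqrt (∑ b, ‖kv a b‖ ^ 2) ≤ Real.sqrt ((∑ b, |(k a b : ℝ)|) ^ 2) :=
          Real.sqrt_le_sqrt hle
      _ = ∑ b, |(k a b : ℝ)| :=
          Real.sqrt_sq (Finset.sum_nonneg fun b _ => abs_nonneg _)
      _ ≤ K := hk a
  -- unpack membership
  rw [hC] at hx₁ hx₂
  obtain ⟨hxZ₁, m₁, hm₁, hd₁⟩ := hx₁
  obtain ⟨hxZ₂, m₂, hm₂, hd₂⟩ := hx₂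
  rw [hZ] at hxZ₁ hxZ₂
  -- resonance bound
  have hres : ∀ j, |(⟪kv j, ω x₁ - ω x₂⟫ : ℝ)| ≤ 2 * α := by
    intro j
    have h1 : |(⟪kv j, ω x₁⟫ : ℝ) + 2 * Real.pi * l j| ≤ α := hxZ₁ j
    have h2 : |(⟪kv j, ω x₂⟫ : ℝ) + 2 * Real.pi * l j| ≤ α := hxZ₂ j
    rw [inner_sub_right]
    have h3 : (⟪kv j, ω x₁⟫ : ℝ) - ⟪kv j, ω x₂⟫ =
        ((⟪kv j, ω x₁⟫ : ℝ) + 2 * Real.pi * l j) - ((⟪kv j, ω x₂⟫ : ℝ) + 2 * Real.pi * l j) := by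
      ring
    rw [h3]
    calc |_ - _| ≤ |(⟪kv j, ω x₁⟫ : ℝ) + 2 * Real.pi * l j| +
          |(⟪kv j, ω x₂⟫ : ℝ) + 2 * Real.pi * l j| := abs_sub _ _
      _ ≤ α + α := add_le_add h1 h2
      _ = 2 * α := by ring
  -- projection
  haveI : CompleteSpace M := FiniteDimensional.complete ℝ M
  have hmin : ∀ y m : EuclideanSpace ℝ (Fin n), m ∈ M →
      ‖y - M.orthogonalProjectionOnto y‖ ≤ ‖y - m‖ := by
    intro y m hm
    have hbot : y - M.orthogonalProjectionOnto y ∈ Mᗮ := M.sub_starProjection_mem_orthogonal y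
    have hmem : ((M.orthogonalProjectionOnto y : EuclideanSpace ℝ (Fin n)) - m) ∈ M :=
      Submodule.sub_mem _ (SetLike.coe_mem _) hm
    have hz : (⟪y - (M.orthogonalProjectionOnto y : EuclideanSpace ℝ (Fin n)),
        (M.orthogonalProjectionOnto y : EuclideanSpace ℝ (Fin n)) - m⟫ : ℝ) = 0 :=
      Submodule.inner_left_of_mem_orthogonal hmem hbot
    have hpy := norm_add_sq_real (y - (M.orthogonalProjectionOnto y : EuclideanSpace ℝ (Fin n)))
      ((M.orthogonalProjectionOnto y : EuclideanSpace ℝ (Fin n)) - m)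
    rw [hz] at hpy
    have hsum : (y - (M.orthogonalProjectionOnto y : EuclideanSpace ℝ (Fin n))) +
        ((M.orthogonalProjectionOnto y : EuclideanSpace ℝ (Fin n)) - m) = y - m := by abel
    rw [hsum] at hpy
    nlinarith [norm_nonneg (y - m),
      norm_nonneg (y - (M.orthogonalProjectionOnto y : EuclideanSpace ℝ (Fin n))),
      sq_nonneg ‖(M.orthogonalProjectionOnto y : EuclideanSpace ℝ (Fin n)) - m‖]
  set pu : EuclideanSpace ℝ (Fin n) :=
    (M.orthogonalProjectionOnto (x₁ - x₂) : EuclideanSpace ℝ (Fin n)) with hpudef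
  have hpu_mem : pu ∈ M := SetLike.coe_mem _
  have hpu_norm : ‖pu‖ ≤ ‖x₁ - x₂‖ := by
    calc ‖pu‖ ≤ ‖M.orthogonalProjectionOnto‖ * ‖x₁ - x₂‖ := by
          have h20 := (M.orthogonalProjectionOnto).le_opNorm (x₁ - x₂)
          rw [hpudef]
          simpa using h20
      _ ≤ 1 * ‖x₁ - x₂‖ :=
          mul_le_mul_of_nonneg_right (M.orthogonalProjectionOnto_norm_le) (norm_nonneg _)
      _ = ‖x₁ - x₂‖ := one_mul _
  have he : ‖(x₁ - x₂) - pu‖ ≤ 2 * δ := by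
    have h7 : x₁ - x₂ = (x₁ - x₀) - (x₂ - x₀) := by abel
    have h8 : pu = (M.orthogonalProjectionOnto (x₁ - x₀) : EuclideanSpace ℝ (Fin n)) -
        (M.orthogonalProjectionOnto (x₂ - x₀) : EuclideanSpace ℝ (Fin n)) := by
      rw [hpudef, h7, map_sub]
      simp
    have h9 : (x₁ - x₂) - pu =
        ((x₁ - x₀) - (M.orthogonalProjectionOnto (x₁ - x₀) : EuclideanSpace ℝ (Fin n))) -
        ((x₂ - x₀) - (M.orthogonalProjectionOnto (x₂ - x₀) : EuclideanSpace ℝ (Fin n))) := by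
      rw [h8, h7]; abel
    have hb1 : ‖(x₁ - x₀) - (M.orthogonalProjectionOnto (x₁ - x₀) : EuclideanSpace ℝ (Fin n))‖ ≤ δ := by
      refine le_trans (hmin (x₁ - x₀) m₁ hm₁) ?_
      rw [sub_sub]; exact hd₁
    have hb2 : ‖(x₂ - x₀) - (M.orthogonalProjectionOnto (x₂ - x₀) : EuclideanSpace ℝ (Fin n))‖ ≤ δ := by
      refine le_trans (hmin (x₂ - x₀) m₂ hm₂) ?_
      rw [sub_sub]; exact hd₂
    calc ‖(x₁ - x₂) - pu‖ ≤ _ + _ := h9 ▸ norm_sub_le _ _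
      _ ≤ δ + δ := add_le_add hb1 hb2
      _ = 2 * δ := by ring
  -- coordinates of pu
  rw [hMspan] at hpu_mem
  obtain ⟨c, hc⟩ := (Submodule.mem_span_range_iff_exists_fun ℝ).1 hpu_mem
  have hK0 : 0 < K := hK
  have hcoeff : ∀ j, |c j| ≤ K ^ (r - 1) * ‖pu‖ := by
    intro j
    have := coeff_bound k kv hkv hind' hknorm c j
    rwa [hc] at this
  have hinner_pu : (⟪ω x₁ - ω x₂, pu⟫ : ℝ) ≤ 2 * α * (r * (K ^ (r - 1) * ‖pu‖)) := by
    conv_lhs => rw [← hc]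
    rw [inner_sum]
    have hterm : ∀ j, (⟪ω x₁ - ω x₂, c j • kv j⟫ : ℝ) ≤ |c j| * (2 * α) := by
      intro j
      rw [real_inner_smul_right]
      calc c j * ⟪ω x₁ - ω x₂, kv j⟫ ≤ |c j * ⟪ω x₁ - ω x₂, kv j⟫| := le_abs_self _
        _ = |c j| * |(⟪ω x₁ - ω x₂, kv j⟫ : ℝ)| := abs_mul _ _
        _ ≤ |c j| * (2 * α) := by
            refine mul_le_mul_of_nonneg_left ?_ (abs_nonneg _)
            rw [real_inner_comm]
            exact hres j
    calc ∑ j, (⟪ω x₁ - ω x₂, c j • kv j⟫ : ℝ) ≤ ∑ j, |c j| * (2 * α) :=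
          Finset.sum_le_sum fun j _ => hterm j
      _ ≤ ∑ _j : Fin r, K ^ (r - 1) * ‖pu‖ * (2 * α) :=
          Finset.sum_le_sum fun j _ => mul_le_mul_of_nonneg_right (hcoeff j)
            (by positivity)
      _ = r * (K ^ (r - 1) * ‖pu‖ * (2 * α)) := by
          rw [Finset.sum_const, Finset.card_univ, Fintype.card_fin, nsmul_eq_mul]
      _ = 2 * α * (r * (K ^ (r - 1) * ‖pu‖)) := by ring
  -- main chain
  have hmain : β * μ * ‖x₁ - x₂‖ ^ 2 ≤
      2 * α * (r * (K ^ (r - 1) * ‖x₁ - x₂‖)) + β * ‖x₁ - x₂‖ * (2 * δ) := by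
    have h10 := hconv x₁ x₂
    have hsplit : (⟪ω x₁ - ω x₂, x₁ - x₂⟫ : ℝ) =
        ⟪ω x₁ - ω x₂, pu⟫ + ⟪ω x₁ - ω x₂, (x₁ - x₂) - pu⟫ := by
      rw [← inner_add_right]
      congr 1
      abel
    have h11 : (⟪ω x₁ - ω x₂, (x₁ - x₂) - pu⟫ : ℝ) ≤ β * ‖x₁ - x₂‖ * (2 * δ) := by
      calc (⟪ω x₁ - ω x₂, (x₁ - x₂) - pu⟫ : ℝ) ≤ ‖ω x₁ - ω x₂‖ * ‖(x₁ - x₂) - pu‖ :=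
            real_inner_le_norm _ _
        _ ≤ (β * ‖x₁ - x₂‖) * (2 * δ) :=
            mul_le_mul (hlip x₁ x₂) he (norm_nonneg _)
              (mul_nonneg hβ.le (norm_nonneg _))
        _ = β * ‖x₁ - x₂‖ * (2 * δ) := by ring
    have h12 : (⟪ω x₁ - ω x₂, pu⟫ : ℝ) ≤ 2 * α * (r * (K ^ (r - 1) * ‖x₁ - x₂‖)) := by
      refine le_trans hinner_pu ?_
      have : K ^ (r - 1) * ‖pu‖ ≤ K ^ (r - 1) * ‖x₁ - x₂‖ :=
        mul_le_mul_of_nonneg_left hpu_norm (by positivity)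
      have h13 : (0 : ℝ) ≤ 2 * α * r := by positivity
      nlinarith [mul_le_mul_of_nonneg_left this h13]
    calc β * μ * ‖x₁ - x₂‖ ^ 2 ≤ ⟪ω x₁ - ω x₂, x₁ - x₂⟫ := h10
      _ = ⟪ω x₁ - ω x₂, pu⟫ + ⟪ω x₁ - ω x₂, (x₁ - x₂) - pu⟫ := hsplit
      _ ≤ 2 * α * (r * (K ^ (r - 1) * ‖x₁ - x₂‖)) + β * ‖x₁ - x₂‖ * (2 * δ) :=
          add_le_add h12 h11
  -- conclude
  have hBM : 0 < β * μ := mul_pos hβ hμ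
  rw [← mul_le_mul_iff_of_pos_left hBM]
  have hEq : β * μ * ((4 / μ) * δ + (2 * r * K ^ (r - 1) / (β * μ)) * α) =
      4 * β * δ + 2 * r * K ^ (r - 1) * α := by
    field_simp
  rw [hEq]
  nlinarith [hmain, norm_nonneg (x₁ - x₂), mul_nonneg hβ.le hδ, hα,
    pow_nonneg hK0.le (r - 1), Nat.cast_nonneg (α := ℝ) r,
    mul_nonneg (mul_nonneg (Nat.cast_nonneg (α := ℝ) r) (pow_nonneg hK0.le (r - 1))) hα,
    sq_nonneg ‖x₁ - x₂‖]
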